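/- Let ν ≥ 1 be an integer and ε > 0 a real number. Then there exists a constant C > 0 such that for all x, y ∈ ℤ^ν, Σ_{z ∈ ℤ^ν} (1 + ‖x − z‖₁)^{−(ν+ε)} · (1 + ‖z − y‖₁)^{−(ν+ε)} ≤ C · (1 + ‖x − y‖₁)^{−(ν+ε)}, where the sum on the left is the (convergent) tsum over ℤ^ν. -/

import Mathlib

open Real

private lemma aux_nat_summable {p : ℝ} (hp : 1 < p) :
    Summable fun n : ℕ => (1 + (n : ℝ)) ^ (-p) := by
  have h : Summable fun n : ℕ => ((n : ℝ)) ^ (-p) :=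
    Real.summable_nat_rpow.mpr (by linarith)
  refine (h.comp_injective Nat.succ_injective).congr fun n => ?_
  simp [Nat.succ_eq_add_one]
  push_cast
  ring_nf

private lemma aux_int_summable {p : ℝ} (hp : 1 < p) :
    Summable fun n : ℤ => (1 + |(n : ℝ)|) ^ (-p) := by
  apply Summable.of_nat_of_neg
  · exact (aux_nat_summable hp).congr fun n => by push_cast [Nat.abs_cast]; ring_nf
  · exact (aux_nat_summable hp).congr fun n => by push_cast [abs_neg, Nat.abs_cast]; ring_nf

set_option maxHeartbeats 1000000 in
private lemma aux_pi_summable {p : ℝ} (hp : 1 < p) (n : ℕ) :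
    Summable fun z : Fin n → ℤ => ∏ i, (1 + |(z i : ℝ)|) ^ (-p) := by
  induction n with
  | zero =>
      exact Summable.of_finite
  | succ n ih =>
      have h1 : ∀ m : ℤ, 0 ≤ (1 + |(m : ℝ)|) ^ (-p) := fun m => by positivity
      have h2 : ∀ z : Fin n → ℤ, 0 ≤ ∏ i, (1 + |(z i : ℝ)|) ^ (-p) := fun z => by positivity
      have key : Summable fun q : ℤ × (Fin n → ℤ) =>
          (1 + |(q.1 : ℝ)|) ^ (-p) * ∏ i, (1 + |(q.2 i : ℝ)|) ^ (-p) :=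
        Summable.mul_of_nonneg (f := fun m : ℤ => (1 + |(m : ℝ)|) ^ (-p))
          (g := fun z : Fin n → ℤ => ∏ i, (1 + |(z i : ℝ)|) ^ (-p))
          (aux_int_summable hp) ih h1 h2
      have := (Fin.consEquiv fun _ : Fin (n + 1) => ℤ).symm.summable_iff.mpr key
      refine this.congr fun z => ?_
      simp [Fin.consEquiv, Fin.prod_univ_succ, Fin.tail]

theorem stmt4 (ν : ℕ) (hν : 1 ≤ ν) (ε : ℝ) (hε : 0 < ε) :
    ∃ C : ℝ, 0 < C ∧ ∀ x y : Fin ν → ℤ,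
      (∑' z : Fin ν → ℤ,
          (1 + ∑ i, |(x i : ℝ) - (z i : ℝ)|) ^ (-((ν : ℝ) + ε)) *
            (1 + ∑ i, |(z i : ℝ) - (y i : ℝ)|) ^ (-((ν : ℝ) + ε)))
        ≤ C * (1 + ∑ i, |(x i : ℝ) - (y i : ℝ)|) ^ (-((ν : ℝ) + ε)) := by
  have hν0 : (0 : ℝ) < ν := by exact_mod_cast hν
  set s : ℝ := (ν : ℝ) + ε with hs_def
  have hs0 : 0 < s := by positivity
  set p : ℝ := s / ν with hp_def
  have hp1 : 1 < p := by
    rw [hp_def, lt_div_iff₀ hν0, one_mul, hs_def]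
    linarith
  -- summability of the basic function
  have hsum : Summable fun z : Fin ν → ℤ => (1 + ∑ i, |(z i : ℝ)|) ^ (-s) := by
    refine Summable.of_nonneg_of_le (fun z => by positivity)
      (fun z => ?_) (aux_pi_summable hp1 ν)
    -- (1 + Σ|z i|)^(-s) ≤ ∏ (1+|z i|)^(-p)
    have hT : (0:ℝ) < 1 + ∑ i, |(z i : ℝ)| := by positivity
    have hprod_pos : (0:ℝ) < ∏ i, (1 + |(z i : ℝ)|) ^ p :=
      Finset.prod_pos fun i _ => rpow_pos_of_pos (by positivity) _
    have hle : (∏ i, (1 + |(z i : ℝ)|) ^ p) ≤ (1 + ∑ i, |(z i : ℝ)|) ^ s := by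
      have h1 : (∏ i, (1 + |(z i : ℝ)|) ^ p) = (∏ i, (1 + |(z i : ℝ)|)) ^ p := by
        rw [← Real.finset_prod_rpow _ _ (fun i _ => by positivity)]
      have h2 : (∏ i, (1 + |(z i : ℝ)|)) ≤ (1 + ∑ i, |(z i : ℝ)|) ^ (ν : ℕ) := by
        calc (∏ i, (1 + |(z i : ℝ)|)) ≤ ∏ _i : Fin ν, (1 + ∑ j, |(z j : ℝ)|) := by
              refine Finset.prod_le_prod (fun i _ => by positivity) (fun i _ => ?_)
              have : |(z i : ℝ)| ≤ ∑ j, |(z j : ℝ)| :=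
                Finset.single_le_sum (f := fun j => |(z j : ℝ)|)
                  (fun j _ => abs_nonneg _) (Finset.mem_univ i)
              linarith
          _ = (1 + ∑ i, |(z i : ℝ)|) ^ (ν : ℕ) := by
              rw [Finset.prod_const, Finset.card_univ, Fintype.card_fin]
      calc (∏ i, (1 + |(z i : ℝ)|) ^ p) = (∏ i, (1 + |(z i : ℝ)|)) ^ p := h1
        _ ≤ ((1 + ∑ i, |(z i : ℝ)|) ^ (ν : ℕ)) ^ p := by
            exact Real.rpow_le_rpow (Finset.prod_nonneg fun i _ => by positivity) h2
              (le_of_lt (by linarith))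
        _ = (1 + ∑ i, |(z i : ℝ)|) ^ s := by
            rw [← Real.rpow_natCast _ ν, ← Real.rpow_mul hT.le]
            congr 1
            field_simp [hp_def]
            rw [hp_def, mul_div_cancel₀ _ hν0.ne']
    calc (1 + ∑ i, |(z i : ℝ)|) ^ (-s) = ((1 + ∑ i, |(z i : ℝ)|) ^ s)⁻¹ := by
          rw [Real.rpow_neg hT.le]
      _ ≤ (∏ i, (1 + |(z i : ℝ)|) ^ p)⁻¹ := by
          exact inv_anti₀ hprod_pos hle
      _ = ∏ i, (1 + |(z i : ℝ)|) ^ (-p) := by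
          rw [← Finset.prod_inv_distrib]
          exact Finset.prod_congr rfl fun i _ => (Real.rpow_neg (by positivity) _).symm
  set S : ℝ := ∑' z : Fin ν → ℤ, (1 + ∑ i, |(z i : ℝ)|) ^ (-s) with hS_def
  have hS1 : (1 : ℝ) ≤ S := by
    have := Summable.le_tsum hsum 0 (fun z _ => by positivity)
    simpa using this
  -- translation invariance
  have key : ∀ x : Fin ν → ℤ,
      Summable (fun z : Fin ν → ℤ => (1 + ∑ i, |(x i : ℝ) - (z i : ℝ)|) ^ (-s)) ∧
      (∑' z : Fin ν → ℤ, (1 + ∑ i, |(x i : ℝ) - (z i : ℝ)|) ^ (-s)) = S := by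
    intro x
    have he : ∀ z : Fin ν → ℤ,
        (fun w : Fin ν → ℤ => (1 + ∑ i, |(w i : ℝ)|) ^ (-s))
          ((Equiv.piCongrRight fun i => Equiv.subLeft (x i)) z)
          = (1 + ∑ i, |(x i : ℝ) - (z i : ℝ)|) ^ (-s) := by
      intro z
      simp only [Equiv.piCongrRight_apply, Pi.map_apply, Equiv.subLeft_apply]
      push_cast
      rfl
    constructor
    · exact ((Equiv.piCongrRight fun i => Equiv.subLeft (x i)).summable_iff.mpr
        hsum).congr he
    · rw [hS_def, ← (Equiv.piCongrRight fun i => Equiv.subLeft (x i)).tsum_eq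
        (fun w : Fin ν → ℤ => (1 + ∑ i, |(w i : ℝ)|) ^ (-s))]
      exact tsum_congr fun z => (he z).symm
  have key' : ∀ y : Fin ν → ℤ,
      Summable (fun z : Fin ν → ℤ => (1 + ∑ i, |(z i : ℝ) - (y i : ℝ)|) ^ (-s)) ∧
      (∑' z : Fin ν → ℤ, (1 + ∑ i, |(z i : ℝ) - (y i : ℝ)|) ^ (-s)) = S := by
    intro y
    have h := key y
    constructor
    · exact h.1.congr fun z => by rw [Finset.sum_congr rfl fun i _ => abs_sub_comm _ _]
    · rw [← h.2]
      exact tsum_congr fun z => by rw [Finset.sum_congr rfl fun i _ => abs_sub_comm _ _]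
  refine ⟨2 ^ s * (S + S), by
    have h2 : (0:ℝ) < 2 ^ s := rpow_pos_of_pos two_pos s
    nlinarith, fun x y => ?_⟩
  set c : ℝ := ∑ i, |(x i : ℝ) - (y i : ℝ)| with hc_def
  have hc0 : 0 ≤ c := Finset.sum_nonneg fun i _ => abs_nonneg _
  have hFc : (0:ℝ) < (1 + c) ^ (-s) := rpow_pos_of_pos (by linarith) _
  -- pointwise bound
  have ptw : ∀ z : Fin ν → ℤ,
      (1 + ∑ i, |(x i : ℝ) - (z i : ℝ)|) ^ (-s) * (1 + ∑ i, |(z i : ℝ) - (y i : ℝ)|) ^ (-s)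
      ≤ (2 ^ s * (1 + c) ^ (-s)) *
        ((1 + ∑ i, |(x i : ℝ) - (z i : ℝ)|) ^ (-s) +
          (1 + ∑ i, |(z i : ℝ) - (y i : ℝ)|) ^ (-s)) := by
    intro z
    set a : ℝ := ∑ i, |(x i : ℝ) - (z i : ℝ)| with ha_def
    set b : ℝ := ∑ i, |(z i : ℝ) - (y i : ℝ)| with hb_def
    have ha0 : 0 ≤ a := Finset.sum_nonneg fun i _ => abs_nonneg _
    have hb0 : 0 ≤ b := Finset.sum_nonneg fun i _ => abs_nonneg _
    have htri : c ≤ a + b := by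
      rw [hc_def, ha_def, hb_def, ← Finset.sum_add_distrib]
      exact Finset.sum_le_sum fun i _ => abs_sub_le _ _ _
    have hFa : (0:ℝ) ≤ (1 + a) ^ (-s) := (rpow_pos_of_pos (by linarith) _).le
    have hFb : (0:ℝ) ≤ (1 + b) ^ (-s) := (rpow_pos_of_pos (by linarith) _).le
    have main : ∀ t : ℝ, 0 ≤ t → c ≤ 2 * t →
        (1 + t) ^ (-s) ≤ 2 ^ s * (1 + c) ^ (-s) := by
      intro t ht hct
      have h1 : (0:ℝ) < (1 + c) / 2 := by linarith
      have h2 : (1 + c) / 2 ≤ 1 + t := by linarith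
      calc (1 + t) ^ (-s) ≤ ((1 + c) / 2) ^ (-s) :=
            Real.rpow_le_rpow_of_nonpos h1 h2 (by linarith)
        _ = 2 ^ s * (1 + c) ^ (-s) := by
            rw [Real.div_rpow (by linarith) (by norm_num), Real.rpow_neg (by norm_num : (0:ℝ) ≤ 2)]
            field_simp
    rcases le_or_gt c (2 * a) with h | h
    · calc (1 + a) ^ (-s) * (1 + b) ^ (-s)
          ≤ (2 ^ s * (1 + c) ^ (-s)) * (1 + b) ^ (-s) :=
            mul_le_mul_of_nonneg_right (main a ha0 h) hFb
        _ ≤ (2 ^ s * (1 + c) ^ (-s)) * ((1 + a) ^ (-s) + (1 + b) ^ (-s)) := by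
            refine mul_le_mul_of_nonneg_left (by linarith) (by positivity)
    · have hb : c ≤ 2 * b := by linarith
      calc (1 + a) ^ (-s) * (1 + b) ^ (-s)
          ≤ (1 + a) ^ (-s) * (2 ^ s * (1 + c) ^ (-s)) :=
            mul_le_mul_of_nonneg_left (main b hb0 hb) hFa
        _ = (2 ^ s * (1 + c) ^ (-s)) * (1 + a) ^ (-s) := by ring
        _ ≤ (2 ^ s * (1 + c) ^ (-s)) * ((1 + a) ^ (-s) + (1 + b) ^ (-s)) := by
            refine mul_le_mul_of_nonneg_left (by linarith) (by positivity)
  -- sum up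
  have hsum_rhs : Summable fun z : Fin ν → ℤ =>
      (2 ^ s * (1 + c) ^ (-s)) *
        ((1 + ∑ i, |(x i : ℝ) - (z i : ℝ)|) ^ (-s) +
          (1 + ∑ i, |(z i : ℝ) - (y i : ℝ)|) ^ (-s)) :=
    (((key x).1.add (key' y).1).mul_left _)
  have hsum_lhs : Summable fun z : Fin ν → ℤ =>
      (1 + ∑ i, |(x i : ℝ) - (z i : ℝ)|) ^ (-s) *
        (1 + ∑ i, |(z i : ℝ) - (y i : ℝ)|) ^ (-s) :=
    Summable.of_nonneg_of_le (fun z => by positivity) ptw hsum_rhs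
  calc (∑' z : Fin ν → ℤ,
        (1 + ∑ i, |(x i : ℝ) - (z i : ℝ)|) ^ (-s) *
          (1 + ∑ i, |(z i : ℝ) - (y i : ℝ)|) ^ (-s))
      ≤ ∑' z : Fin ν → ℤ, (2 ^ s * (1 + c) ^ (-s)) *
          ((1 + ∑ i, |(x i : ℝ) - (z i : ℝ)|) ^ (-s) +
            (1 + ∑ i, |(z i : ℝ) - (y i : ℝ)|) ^ (-s)) :=
        Summable.tsum_le_tsum ptw hsum_lhs hsum_rhs
    _ = (2 ^ s * (1 + c) ^ (-s)) * (S + S) := by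
        rw [tsum_mul_left, Summable.tsum_add (key x).1 (key' y).1, (key x).2, (key' y).2]
    _ = (2 ^ s * (S + S)) * (1 + c) ^ (-s) := by ring
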